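/- Let G be a connected simple graph and let G₁, G₂ be disjoint connected subgraphs. For i = 1, 2, let G'ᵢ denote the graph obtained from G by collapsing Gᵢ to a single vertex. If both G'₁ and G'₂ are 2-vertex connected, then G is 2-vertex connected. -/

import Mathlib

/-- The setoid on the vertex set that identifies all vertices of `S` to one point. -/
def collapseSetoid {V : Type*} (S : Set V) : Setoid V where
  r x y := x = y ∨ (x ∈ S ∧ y ∈ S)
  iseqv := by
    refine ⟨fun x => Or.inl rfl, ?_, ?_⟩
    · rintro x y (rfl | h)
      · exact Or.inl rfl
      · exact Or.inr ⟨h.2, h.1⟩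
    · rintro x y z (rfl | h1) h2
      · exact h2
      · rcases h2 with rfl | h2
        · exact Or.inr h1
        · exact Or.inr ⟨h1.1, h2.2⟩

/-- The graph obtained from `G` by collapsing the set `S` of vertices to a single vertex. -/
def collapse {V : Type*} (G : SimpleGraph V) (S : Set V) :
    SimpleGraph (Quotient (collapseSetoid S)) where
  Adj a b := a ≠ b ∧ ∃ x y : V,
    Quotient.mk (collapseSetoid S) x = a ∧ Quotient.mk (collapseSetoid S) y = b ∧ G.Adj x y
  symm := ⟨by
    rintro a b ⟨hne, x, y, hx, hy, hadj⟩
    exact ⟨hne.symm, y, x, hy, hx, hadj.symm⟩⟩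
  loopless := ⟨fun a h => h.1 rfl⟩

/-- A graph is 2-vertex connected if it is connected and removing any single
vertex leaves it connected (no cut vertex). -/
def TwoVertexConnected {V : Type*} (G : SimpleGraph V) : Prop :=
  G.Connected ∧ ∀ v : V, (G.induce {u : V | u ≠ v}).Connected

lemma key {V : Type*} (G : SimpleGraph V) (S : Set V)
    (hS : (G.induce S).Connected) (v : V) (hv : v ∉ S)
    (hcol : ((collapse G S).induce
      {a | a ≠ Quotient.mk (collapseSetoid S) v}).Connected) :
    (G.induce {u : V | u ≠ v}).Connected := by
  set H := G.induce {u : V | u ≠ v} with hH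
  -- a vertex is in class of v iff it equals v
  have hclass : ∀ x : V, Quotient.mk (collapseSetoid S) x =
      Quotient.mk (collapseSetoid S) v ↔ x = v := by
    intro x
    constructor
    · intro h
      rcases Quotient.exact h with rfl | h
      · rfl
      · exact absurd h.2 hv
    · rintro rfl; rfl
  -- within S, reachability in H
  have hSreach : ∀ (x y : V) (hx : x ∈ S) (hy : y ∈ S),
      H.Reachable ⟨x, fun h => hv (h ▸ hx)⟩ ⟨y, fun h => hv (h ▸ hy)⟩ := by
    intro x y hx hy
    exact (hS.preconnected ⟨x, hx⟩ ⟨y, hy⟩).map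
      (⟨fun p => ⟨p.1, fun h => hv (h ▸ p.2)⟩, fun h => h⟩ : G.induce S →g H)
  -- same class implies reachability
  have hclassreach : ∀ (x y : V) (hx : x ≠ v) (hy : y ≠ v),
      Quotient.mk (collapseSetoid S) x = Quotient.mk (collapseSetoid S) y →
      H.Reachable ⟨x, hx⟩ ⟨y, hy⟩ := by
    intro x y hx hy h
    rcases Quotient.exact h with rfl | h
    · exact SimpleGraph.Reachable.refl _
    · exact hSreach x y h.1 h.2
  rw [SimpleGraph.connected_iff]
  refine ⟨?_, ?_⟩
  swap
  · obtain ⟨⟨a, ha⟩⟩ := hcol.nonempty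
    refine ⟨⟨a.out, ?_⟩⟩
    intro h
    exact ha (by rw [← Quotient.out_eq a, h])
  intro p q
  obtain ⟨pv, hp⟩ := p
  obtain ⟨qv, hq⟩ := q
  have hpT : Quotient.mk (collapseSetoid S) pv ∈
      {a | a ≠ Quotient.mk (collapseSetoid S) v} := fun h => hp ((hclass pv).mp h)
  have hqT : Quotient.mk (collapseSetoid S) qv ∈
      {a | a ≠ Quotient.mk (collapseSetoid S) v} := fun h => hq ((hclass qv).mp h)
  obtain ⟨w⟩ := hcol.preconnected ⟨_, hpT⟩ ⟨_, hqT⟩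
  -- generalize over walks
  have main : ∀ (a b : {q // q ∈ {a | a ≠ Quotient.mk (collapseSetoid S) v}})
      (w : ((collapse G S).induce {a | a ≠ Quotient.mk (collapseSetoid S) v}).Walk a b)
      (x y : V) (hx : x ≠ v) (hy : y ≠ v),
      Quotient.mk (collapseSetoid S) x = a.1 → Quotient.mk (collapseSetoid S) y = b.1 →
      H.Reachable ⟨x, hx⟩ ⟨y, hy⟩ := by
    intro a b w
    induction w with
    | nil =>
      intro x y hx hy hxa hya
      exact hclassreach x y hx hy (hxa.trans hya.symm)
    | @cons a c b h w ih =>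
      intro x y hx hy hxa hyb
      obtain ⟨hne, x', y', hx', hy', hadj⟩ := h
      simp only [Function.Embedding.coe_subtype] at hx' hy'
      have hx'v : x' ≠ v := fun h => a.2 (by rw [← hx', h])
      have hy'v : y' ≠ v := fun h => c.2 (by rw [← hy', h])
      have r1 : H.Reachable ⟨x, hx⟩ ⟨x', hx'v⟩ :=
        hclassreach x x' hx hx'v (hxa.trans hx'.symm)
      have r2 : H.Adj ⟨x', hx'v⟩ ⟨y', hy'v⟩ := hadj
      have r3 : H.Reachable ⟨y', hy'v⟩ ⟨y, hy⟩ := ih y' y hy'v hy hy' hyb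
      exact (r1.trans r2.reachable).trans r3
  exact main _ _ w pv qv hp hq rfl rfl

theorem stmt8 {V : Type*} (G : SimpleGraph V) (hG : G.Connected)
    (S₁ S₂ : Set V) (hdisj : Disjoint S₁ S₂)
    (h1 : (G.induce S₁).Connected) (h2 : (G.induce S₂).Connected)
    (hc1 : TwoVertexConnected (collapse G S₁))
    (hc2 : TwoVertexConnected (collapse G S₂)) :
    TwoVertexConnected G := by
  refine ⟨hG, fun v => ?_⟩
  by_cases hv : v ∈ S₁
  · exact key G S₂ h2 v (Set.disjoint_left.mp hdisj hv)
      (hc2.2 (Quotient.mk (collapseSetoid S₂) v))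
  · exact key G S₁ h1 v hv (hc1.2 (Quotient.mk (collapseSetoid S₁) v))
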